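/- Let d ≥ 1 and let f = y^{⊗d} ⊕ ⊕_{0 ≤ i < d} f_i ⊗ y^{⊗i} be a monic tropical polynomial, where f_0, …, f_{d−1} are tropical polynomials in n variables with integer coefficients (monic means the coefficient of y^{⊗d} is the single monomial with coefficient 0 and exponent 0). Then the function y(x) = min_{1 ≤ i ≤ d} f_{d−i}(x)/i is given by the tropical Newton–Puiseux polynomial ⊕_{1 ≤ i ≤ d} f_{d−i}^{⊗(1/i)} (where for f_{d−i} = ⊕_J c_J ⊗ x^{⊗J} one has f_{d−i}^{⊗(1/i)} = ⊕_J (c_J/i) ⊗ x^{⊗(J/i)}), it is a resolution of f, and it is the minimal resolution: every resolution y' of f satisfies y(x) ≤ y'(x) for all x ∈ ℝ^n. -/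

import Mathlib

open Finset

/-- A tropical polynomial in `n` variables: a finite nonempty family of monomials
`(c, J)` with real coefficient `c` and exponent `J ∈ ℕ^n`.  It defines the convex
piecewise-linear function `x ↦ min_J (c_J + ⟨J, x⟩)`. -/
structure TropPoly (n : ℕ) where
  monos : Finset (ℝ × (Fin n → ℕ))
  ne : monos.Nonempty

/-- The convex piecewise-linear function defined by a tropical polynomial. -/
noncomputable def TropPoly.eval {n : ℕ} (f : TropPoly n) (x : Fin n → ℝ) : ℝ :=
  f.monos.inf' f.ne fun p => p.1 + ∑ j, (p.2 j : ℝ) * x j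

/-- A tropical Newton–Puiseux polynomial in `n` variables: a finite nonempty family of
monomials `(a, I)` with rational coefficient `a` and exponent `I ∈ ℚ^n`. -/
structure NPPoly (n : ℕ) where
  monos : Finset (ℚ × (Fin n → ℚ))
  ne : monos.Nonempty

/-- The convex piecewise-linear function defined by a tropical Newton–Puiseux polynomial. -/
noncomputable def NPPoly.eval {n : ℕ} (y : NPPoly n) (x : Fin n → ℝ) : ℝ :=
  y.monos.inf' y.ne fun p => (p.1 : ℝ) + ∑ j, (p.2 j : ℝ) * x j

/-- The value of the term `f_i ⊗ y^{⊗ i}` of `f = ⊕_{i=0}^d f_i ⊗ y^{⊗ i}` at the point `x`,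
when the indeterminate `y` has the value `y0`. -/
noncomputable def termVal {n d : ℕ} (f : Fin (d+1) → TropPoly n) (x : Fin n → ℝ) (y0 : ℝ)
    (i : Fin (d+1)) : ℝ :=
  (f i).eval x + (i : ℕ) * y0

/-- At the point `x`, with value `y0` substituted for the indeterminate, the minimum of the
`d+1` values `f_i(x) + i·y0` is attained for at least two distinct indices `i`. -/
def TiesAt {n d : ℕ} (f : Fin (d+1) → TropPoly n) (x : Fin n → ℝ) (y0 : ℝ) : Prop :=
  ∃ i₁ i₂ : Fin (d+1), i₁ ≠ i₂ ∧ termVal f x y0 i₁ = termVal f x y0 i₂ ∧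
    ∀ i, termVal f x y0 i₁ ≤ termVal f x y0 i

/-- A function `y : ℝ^n → ℝ` is a resolution of `f = ⊕_{i=0}^d f_i ⊗ y^{⊗ i}` if at every
point `x` the minimum of the `d+1` values `f_i(x) + i·y(x)` is attained for at least two
distinct indices. -/
def IsResolution {n d : ℕ} (f : Fin (d+1) → TropPoly n) (y : (Fin n → ℝ) → ℝ) : Prop :=
  ∀ x, TiesAt f x (y x)

/-- A tropical polynomial has integer coefficients. -/
def HasIntCoeffs {n : ℕ} (f : TropPoly n) : Prop :=
  ∀ p ∈ f.monos, ∃ z : ℤ, p.1 = (z : ℝ)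

/-- The function `x ↦ min_{1 ≤ i ≤ d} f_{d-i}(x) / i`, written here as the minimum over
`j = d - i` ranging over `0, ..., d-1` of `f_j(x) / (d - j)`. -/
noncomputable def minimalCandidate {n d : ℕ} (f : Fin (d+1) → TropPoly n) (hd : 0 < d)
    (x : Fin n → ℝ) : ℝ :=
  (Finset.univ : Finset (Fin d)).inf' ⟨⟨0, hd⟩, Finset.mem_univ _⟩
    fun j => (f j.castSucc).eval x / ((d : ℝ) - (j : ℕ))

noncomputable def ratOf (r : ℝ) : ℚ :=
  @dite _ (∃ z : ℤ, r = (z : ℝ)) (Classical.dec _) (fun h => (h.choose : ℚ)) (fun _ => 0)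

lemma ratOf_spec {r : ℝ} (h : ∃ z : ℤ, r = (z : ℝ)) : ((ratOf r : ℚ) : ℝ) = r := by
  rw [ratOf, dif_pos h]; push_cast; exact h.choose_spec.symm

lemma inf'_div_const {β : Type*} {s : Finset β} (h : s.Nonempty) (g : β → ℝ) {D : ℝ}
    (hD : 0 < D) : s.inf' h g / D = s.inf' h fun b => g b / D := by
  apply le_antisymm
  · apply Finset.le_inf'
    intro b hb
    exact div_le_div_of_nonneg_right (Finset.inf'_le _ hb) hD.le
  · obtain ⟨b, hb, hbeq⟩ := Finset.exists_mem_eq_inf' h g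
    rw [hbeq]
    exact Finset.inf'_le _ hb

/-- For a monic tropical polynomial `f = y^d ⊕ ⊕_{i<d} f_i ⊗ y^i` (the coefficient of
`y^d` being the single monomial with coefficient `0` and exponent `0`), the function
`y(x) = min_{1 ≤ i ≤ d} f_{d-i}(x)/i` is given by a tropical Newton-Puiseux polynomial
(namely `⊕_{1 ≤ i ≤ d} f_{d-i}^{⊗(1/i)}`), it is a resolution of `f`, and it is the
minimal resolution. -/
theorem monic_minimal_resolution {n d : ℕ} (hd : 0 < d) (f : Fin (d+1) → TropPoly n)
    (hmonic : (f (Fin.last d)).monos = {((0 : ℝ), fun _ => (0 : ℕ))})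
    (hint : ∀ i : Fin d, HasIntCoeffs (f i.castSucc)) :
    (∃ Y : NPPoly n, ∀ x, Y.eval x = minimalCandidate f hd x) ∧
      IsResolution f (minimalCandidate f hd) ∧
      ∀ y' : NPPoly n, IsResolution f y'.eval → ∀ x, minimalCandidate f hd x ≤ y'.eval x := by
  classical
  have hD : ∀ j : Fin d, (0 : ℝ) < (d : ℝ) - (j : ℕ) := by
    intro j
    have : ((j : ℕ) : ℝ) < (d : ℝ) := by exact_mod_cast j.is_lt
    linarith
  have heval_last : ∀ x, (f (Fin.last d)).eval x = 0 := by
    intro x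
    simp [TropPoly.eval, hmonic]
  have hne : (Finset.univ : Finset (Fin d)).Nonempty := ⟨⟨0, hd⟩, Finset.mem_univ _⟩
  refine ⟨?_, ?_, ?_⟩
  · -- existence of the Newton–Puiseux polynomial
    have hDq : ∀ j : Fin d, ((d : ℚ) - (j : ℕ)) ≠ 0 := by
      intro j
      have : ((j : ℕ) : ℚ) < (d : ℚ) := by exact_mod_cast j.is_lt
      linarith
    set φ : Fin d → (ℝ × (Fin n → ℕ)) → (ℚ × (Fin n → ℚ)) := fun j p =>
      (ratOf p.1 / ((d : ℚ) - (j : ℕ)), fun k => (p.2 k : ℚ) / ((d : ℚ) - (j : ℕ))) with hφ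
    refine ⟨⟨Finset.univ.biUnion (fun j : Fin d => (f j.castSucc).monos.image (φ j)),
      Finset.Nonempty.biUnion hne (fun j _ => ((f j.castSucc).ne).image _)⟩, ?_⟩
    intro x
    show Finset.inf' _ _ _ = _
    rw [Finset.inf'_biUnion _ hne (fun j => ((f j.castSucc).ne).image (φ j))]
    unfold minimalCandidate
    refine Finset.inf'_congr _ rfl ?_
    intro j _
    rw [Finset.inf'_image]
    unfold TropPoly.eval
    rw [inf'_div_const _ _ (hD j)]
    refine Finset.inf'_congr _ rfl ?_
    intro p hp
    obtain ⟨z, hz⟩ := hint j p hp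
    have h1 : ((ratOf p.1 : ℚ) : ℝ) = p.1 := ratOf_spec ⟨z, hz⟩
    simp only [Function.comp, hφ]
    push_cast
    rw [h1, add_div, Finset.sum_div]
    congr 1
    apply Finset.sum_congr rfl
    intro k _
    ring
  · -- resolution
    intro x
    obtain ⟨j0, hj0mem, hj0⟩ := Finset.exists_mem_eq_inf' hne
      (fun j : Fin d => (f j.castSucc).eval x / ((d : ℝ) - (j : ℕ)))
    set y0 := minimalCandidate f hd x with hy0
    have hj0eq : (f j0.castSucc).eval x = ((d : ℝ) - (j0 : ℕ)) * y0 := by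
      have : y0 = (f j0.castSucc).eval x / ((d : ℝ) - (j0 : ℕ)) := hj0
      rw [this, mul_div_assoc']; exact (mul_div_cancel_left₀ _ (hD j0).ne').symm
    have hle : ∀ j : Fin d, ((d : ℝ) - (j : ℕ)) * y0 ≤ (f j.castSucc).eval x := by
      intro j
      have h1 : y0 ≤ (f j.castSucc).eval x / ((d : ℝ) - (j : ℕ)) :=
        Finset.inf'_le _ (Finset.mem_univ j)
      rw [le_div_iff₀ (hD j)] at h1
      linarith [h1]
    refine ⟨j0.castSucc, Fin.last d, (Fin.castSucc_lt_last j0).ne, ?_, ?_⟩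
    · simp only [termVal, heval_last, Fin.val_last, Fin.coe_castSucc, hj0eq]
      ring
    · intro i
      rcases Fin.eq_castSucc_or_eq_last i with ⟨j, rfl⟩ | rfl
      · simp only [termVal, Fin.coe_castSucc, hj0eq]
        have := hle j
        nlinarith [this]
      · apply le_of_eq
        simp only [termVal, heval_last, Fin.val_last, Fin.coe_castSucc, hj0eq]
        ring
  · -- minimality
    intro y' hres x
    obtain ⟨i₁, i₂, hne12, heq, hmin⟩ := hres x
    set t := y'.eval x with ht
    have key : ∃ j : Fin d, termVal f x t j.castSucc ≤ termVal f x t (Fin.last d) := by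
      rcases Fin.eq_castSucc_or_eq_last i₁ with ⟨j, rfl⟩ | rfl
      · exact ⟨j, hmin _⟩
      · rcases Fin.eq_castSucc_or_eq_last i₂ with ⟨j, rfl⟩ | rfl
        · exact ⟨j, heq.symm.le.trans (hmin _)⟩
        · exact absurd rfl hne12
    obtain ⟨j, hj⟩ := key
    simp only [termVal, heval_last, Fin.val_last, Fin.coe_castSucc, zero_add] at hj
    have h2 : (f j.castSucc).eval x / ((d : ℝ) - (j : ℕ)) ≤ t := by
      rw [div_le_iff₀ (hD j)]
      nlinarith [hj]
    exact le_trans (Finset.inf'_le _ (Finset.mem_univ j)) h2
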